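/- Let X be a locally pseudocompact Tychonoff space. Then ζX is the unique (up to equivalence of extensions) Tychonoff extension Y of X with compact remainder satisfying both: (1) a free z-ultrafilter in X is free in Y (i.e., the intersection of the closures in Y of its members is empty) if and only if it has an element contained in a cozero-set of X with pseudocompact closure in X; and (2) distinct z-ultrafilters in X have disjoint adherences in Y, where the adherence in Y of a z-ultrafilter is the intersection of the closures in Y of its members. -/

import Mathlib

set_option linter.unusedSectionVars false


open Set Topology

/-- A zero-set: the preimage of `{0}` under a continuous real-valued function. -/
def IsZeroSet {Y : Type*} [TopologicalSpace Y] (Z : Set Y) : Prop :=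
  ∃ f : C(Y, ℝ), Z = f ⁻¹' {0}

/-- A cozero-set: the complement of a zero-set. -/
def IsCozeroSet {Y : Type*} [TopologicalSpace Y] (C : Set Y) : Prop :=
  IsZeroSet Cᶜ

/-- A space is pseudocompact if every continuous real-valued function on it is bounded. -/
def IsPseudocompact (Y : Type*) [TopologicalSpace Y] : Prop :=
  ∀ f : C(Y, ℝ), ∃ M : ℝ, ∀ y, |f y| ≤ M

/-- A subset is pseudocompact if it is pseudocompact as a subspace. -/
def IsPseudocompactSet {Y : Type*} [TopologicalSpace Y] (A : Set Y) : Prop :=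
  ∀ f : C(A, ℝ), ∃ M : ℝ, ∀ a, |f a| ≤ M

/-- The Hewitt realcompactification `υX`, realized as the subspace of `βX` consisting of
those `p ∈ βX` such that every zero-set of `βX` containing `p` meets `X`. -/
def upsilonSet (X : Type*) [TopologicalSpace X] : Set (StoneCech X) :=
  {p | ∀ Z : Set (StoneCech X), IsZeroSet Z → p ∈ Z →
    (Z ∩ Set.range (stoneCechUnit : X → StoneCech X)).Nonempty}

/-- `ζX = X ∪ cl_{βX}(βX \ υX)`, as a subset of `βX`. -/
def zetaSet (X : Type*) [TopologicalSpace X] : Set (StoneCech X) :=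
  Set.range (stoneCechUnit : X → StoneCech X) ∪ closure (upsilonSet X)ᶜ

/-- A z-filter on `Y`: a nonempty family of nonempty zero-sets, closed under finite
intersections and under zero-set supersets. -/
def IsZFilter {Y : Type*} [TopologicalSpace Y] (F : Set (Set Y)) : Prop :=
  F.Nonempty ∧ (∀ Z ∈ F, IsZeroSet Z ∧ Z.Nonempty) ∧
    (∀ Z ∈ F, ∀ W ∈ F, Z ∩ W ∈ F) ∧
    (∀ Z ∈ F, ∀ W : Set Y, IsZeroSet W → Z ⊆ W → W ∈ F)

/-- A z-ultrafilter: a maximal z-filter. -/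
def IsZUltrafilter {Y : Type*} [TopologicalSpace Y] (F : Set (Set Y)) : Prop :=
  IsZFilter F ∧ ∀ G : Set (Set Y), IsZFilter G → F ⊆ G → G = F

/-- A family of sets has the countable intersection property if every countable
subfamily has nonempty intersection. -/
def HasCIP {Y : Type*} (F : Set (Set Y)) : Prop :=
  ∀ G ⊆ F, G.Countable → (⋂₀ G).Nonempty

section ZeroSets

variable {X : Type*} [TopologicalSpace X]

lemma IsZeroSet.isClosed {Z : Set X} (h : IsZeroSet Z) : IsClosed Z := by
  obtain ⟨f, rfl⟩ := h
  exact isClosed_singleton.preimage f.continuous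

lemma isZeroSet_univ : IsZeroSet (univ : Set X) :=
  ⟨⟨fun _ => 0, continuous_const⟩, by ext x; simp⟩

lemma isZeroSet_le {f : X → ℝ} (hf : Continuous f) (a : ℝ) : IsZeroSet {x | f x ≤ a} := by
  refine ⟨⟨fun x => max (f x - a) 0, by fun_prop⟩, ?_⟩
  ext x
  simp only [mem_setOf_eq, ContinuousMap.coe_mk, mem_preimage, mem_singleton_iff]
  constructor
  · intro h; simp [max_eq_right (sub_nonpos.2 h)]
  · intro h
    by_contra hlt
    push_neg at hlt
    have : max (f x - a) 0 = f x - a := max_eq_left (by linarith)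
    rw [this] at h; linarith

lemma isZeroSet_ge {f : X → ℝ} (hf : Continuous f) (a : ℝ) : IsZeroSet {x | a ≤ f x} := by
  have := isZeroSet_le (hf.neg) (-a)
  convert this using 1
  ext x; simp

lemma IsZeroSet.inter {Z W : Set X} (hZ : IsZeroSet Z) (hW : IsZeroSet W) :
    IsZeroSet (Z ∩ W) := by
  obtain ⟨f, rfl⟩ := hZ
  obtain ⟨g, rfl⟩ := hW
  refine ⟨⟨fun x => |f x| + |g x|, by fun_prop⟩, ?_⟩
  ext x
  simp only [mem_inter_iff, mem_preimage, mem_singleton_iff, ContinuousMap.coe_mk]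
  rw [add_eq_zero_iff_of_nonneg (abs_nonneg _) (abs_nonneg _)]
  simp [abs_eq_zero]

end ZeroSets

section ZUltra

variable {X : Type*} [TopologicalSpace X]

lemma IsZUltrafilter.mem_of_forall_inter {F : Set (Set X)} (hF : IsZUltrafilter F)
    {W : Set X} (hW : IsZeroSet W) (h : ∀ Z ∈ F, (Z ∩ W).Nonempty) : W ∈ F := by
  obtain ⟨⟨hne, hmem, hinter, hsup⟩, hmax⟩ := hF
  set G : Set (Set X) := {V | IsZeroSet V ∧ ∃ Z ∈ F, Z ∩ W ⊆ V} with hGdef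
  have hWG : W ∈ G := by
    obtain ⟨Z₀, hZ₀⟩ := hne
    exact ⟨hW, Z₀, hZ₀, inter_subset_right⟩
  have hFG : F ⊆ G := fun Z hZ => ⟨(hmem Z hZ).1, Z, hZ, inter_subset_left⟩
  have hG : IsZFilter G := by
    refine ⟨⟨W, hWG⟩, ?_, ?_, ?_⟩
    · rintro V ⟨hV, Z, hZ, hsub⟩
      exact ⟨hV, (h Z hZ).mono hsub⟩
    · rintro V₁ ⟨hV₁, Z₁, hZ₁, h₁⟩ V₂ ⟨hV₂, Z₂, hZ₂, h₂⟩
      refine ⟨hV₁.inter hV₂, Z₁ ∩ Z₂, hinter _ hZ₁ _ hZ₂, ?_⟩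
      rintro x ⟨⟨hx₁, hx₂⟩, hxW⟩
      exact ⟨h₁ ⟨hx₁, hxW⟩, h₂ ⟨hx₂, hxW⟩⟩
    · rintro V ⟨hV, Z, hZ, hsub⟩ V' hV' hVV'
      exact ⟨hV', Z, hZ, hsub.trans hVV'⟩
  rw [← hmax G hG hFG]
  exact hWG

lemma IsZUltrafilter.exists_disjoint {F G : Set (Set X)} (hF : IsZUltrafilter F)
    (hG : IsZUltrafilter G) (hne : F ≠ G) : ∃ Z ∈ F, ∃ W ∈ G, Z ∩ W = ∅ := by
  by_contra hcon
  push_neg at hcon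
  apply hne
  have h1 : G ⊆ F := by
    intro W hWG
    refine hF.mem_of_forall_inter (hG.1.2.1 W hWG).1 (fun Z hZ => ?_)
    exact hcon Z hZ W hWG
  have h2 : F ⊆ G := by
    intro Z hZF
    refine hG.mem_of_forall_inter (hF.1.2.1 Z hZF).1 (fun W hW => ?_)
    rw [inter_comm]
    exact hcon Z hZF W hW
  exact (subset_antisymm h2 h1)

end ZUltra

section Adh

variable {X K : Type*} [TopologicalSpace X] [TopologicalSpace K] {c : X → K}

lemma adh_subsingleton [NormalSpace K] [T1Space K] (hc : Continuous c)
    {F : Set (Set X)} (hF : IsZUltrafilter F) :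
    (⋂ Z ∈ F, closure (c '' Z)).Subsingleton := by
  intro w₁ h₁ w₂ h₂
  by_contra hne
  obtain ⟨f, hf0, hf1, _⟩ := exists_continuous_zero_one_of_isClosed
    (isClosed_singleton (x := w₁)) (isClosed_singleton (x := w₂))
    (by simpa [Set.disjoint_singleton] using hne)
  simp only [mem_iInter] at h₁ h₂
  have hZ₁ : {x | f (c x) ≤ 1/3} ∈ F := by
    refine hF.mem_of_forall_inter (isZeroSet_le (f.continuous.comp hc) (1/3)) (fun Z hZ => ?_)
    have hw : w₁ ∈ closure (c '' Z) := h₁ Z hZ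
    have hO : w₁ ∈ f ⁻¹' (Iio (1/3)) := by
      simp only [mem_preimage, mem_Iio]
      rw [hf0 (mem_singleton w₁)]; norm_num
    obtain ⟨y, hyO, hyZ⟩ := mem_closure_iff.1 hw _ (isOpen_Iio.preimage f.continuous) hO
    obtain ⟨x, hxZ, rfl⟩ := hyZ
    refine ⟨x, hxZ, ?_⟩
    simp only [mem_preimage, mem_Iio, mem_Ioi] at hyO
    simp only [mem_setOf_eq]
    linarith
  have hZ₂ : {x | 2/3 ≤ f (c x)} ∈ F := by
    refine hF.mem_of_forall_inter (isZeroSet_ge (f.continuous.comp hc) (2/3)) (fun Z hZ => ?_)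
    have hw : w₂ ∈ closure (c '' Z) := h₂ Z hZ
    have hO : w₂ ∈ f ⁻¹' (Ioi (2/3)) := by
      simp only [mem_preimage, mem_Ioi]
      rw [hf1 (mem_singleton w₂)]; norm_num
    obtain ⟨y, hyO, hyZ⟩ := mem_closure_iff.1 hw _ (isOpen_Ioi.preimage f.continuous) hO
    obtain ⟨x, hxZ, rfl⟩ := hyZ
    refine ⟨x, hxZ, ?_⟩
    simp only [mem_preimage, mem_Iio, mem_Ioi] at hyO
    simp only [mem_setOf_eq]
    linarith
  obtain ⟨x, hx₁, hx₂⟩ := (hF.1.2.1 _ (hF.1.2.2.1 _ hZ₁ _ hZ₂)).2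
  simp only [mem_setOf_eq] at hx₁ hx₂
  linarith

lemma adh_nonempty [CompactSpace K] {F : Set (Set X)} (hF : IsZUltrafilter F) :
    (⋂ Z ∈ F, closure (c '' Z)).Nonempty := by
  rw [biInter_eq_iInter]
  have : Nonempty ↥F := hF.1.1.to_subtype
  apply IsCompact.nonempty_iInter_of_directed_nonempty_isCompact_isClosed
  · rintro ⟨Z, hZ⟩ ⟨W, hW⟩
    refine ⟨⟨Z ∩ W, hF.1.2.2.1 _ hZ _ hW⟩, ?_, ?_⟩
    · exact closure_mono (image_mono inter_subset_left)
    · exact closure_mono (image_mono inter_subset_right)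
  · rintro ⟨Z, hZ⟩
    exact (((hF.1.2.1 Z hZ).2).image c).closure
  · rintro ⟨Z, hZ⟩
    exact isClosed_closure.isCompact
  · rintro ⟨Z, hZ⟩
    exact isClosed_closure

end Adh

section MemClosure

variable {K : Type*} [TopologicalSpace K]

lemma mem_closure_inter_of_isOpen {A O : Set K} {p : K} (hp : p ∈ closure A)
    (hO : IsOpen O) (hpO : p ∈ O) : p ∈ closure (A ∩ O) := by
  rw [mem_closure_iff] at hp ⊢
  intro V hV hpV
  obtain ⟨y, hy⟩ := hp (V ∩ O) (hV.inter hO) ⟨hpV, hpO⟩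
  exact ⟨y, hy.1.1, hy.2, hy.1.2⟩

end MemClosure

section SC

variable {X : Type*} [TopologicalSpace X] [T2Space X] [CompletelyRegularSpace X]

omit [T2Space X] [CompletelyRegularSpace X] in
lemma unit_comp_extend {f : X → unitInterval} (hf : Continuous f) (x : X) :
    stoneCechExtend hf (stoneCechUnit x) = f x :=
  congrFun (stoneCechExtend_extends hf) x

lemma isEmbedding_stoneCechUnit' : IsEmbedding (stoneCechUnit : X → StoneCech X) := by
  constructor
  · rw [isInducing_iff_nhds]
    intro x
    refine le_antisymm (Filter.tendsto_iff_comap.1 (continuous_stoneCechUnit.tendsto x)) ?_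
    intro U hU
    obtain ⟨V, hVU, hVopen, hxV⟩ := mem_nhds_iff.1 hU
    obtain ⟨f, hf, hf0, hf1⟩ :=
      CompletelyRegularSpace.completely_regular x Vᶜ hVopen.isClosed_compl (by simp [hxV])
    set G := stoneCechExtend hf with hG
    have hGcont : Continuous G := continuous_stoneCechExtend hf
    set W : Set (StoneCech X) := G ⁻¹' {t | (t : ℝ) < 1/2} with hW
    have hWopen : IsOpen W := (isOpen_Iio.preimage continuous_subtype_val).preimage hGcont
    have hWx : stoneCechUnit x ∈ W := by
      have hGx : G (stoneCechUnit x) = f x := unit_comp_extend hf x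
      simp only [hW, mem_preimage, mem_setOf_eq, hGx, hf0]
      norm_num
    refine Filter.mem_of_superset (Filter.preimage_mem_comap (hWopen.mem_nhds hWx)) ?_
    intro x' hx'
    have hGx' : G (stoneCechUnit x') = f x' := unit_comp_extend hf x'
    simp only [mem_preimage, hW, mem_setOf_eq, hGx'] at hx'
    by_contra hx'V
    have hVc : x' ∈ Vᶜ := fun h => hx'V (hVU h)
    have : f x' = 1 := by simpa using hf1 hVc
    rw [this] at hx'
    norm_num at hx'
  · intro x y hxy
    by_contra hne
    obtain ⟨f, hf, hf0, hf1⟩ :=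
      CompletelyRegularSpace.completely_regular x {y} isClosed_singleton (by simpa using hne)
    have h0 : stoneCechExtend hf (stoneCechUnit x) = f x := unit_comp_extend hf x
    have h1 : stoneCechExtend hf (stoneCechUnit y) = f y := unit_comp_extend hf y
    have hy : f y = 1 := by simpa using hf1 (mem_singleton y)
    have hfeq : f x = f y := by rw [← h0, hxy, h1]
    rw [hf0, hy] at hfeq
    have h01 := congrArg Subtype.val hfeq
    norm_num at h01

lemma disjoint_closure_image_of_disjoint_zeroSets {Z W : Set X} (hZ : IsZeroSet Z)
    (hW : IsZeroSet W) (hd : Z ∩ W = ∅) :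
    closure (stoneCechUnit '' Z) ∩ closure (stoneCechUnit '' W) = ∅ := by
  obtain ⟨f, rfl⟩ := hZ
  obtain ⟨g, rfl⟩ := hW
  have hdenom : ∀ x : X, x ∈ (f ⁻¹' {0} ∩ g ⁻¹' {0})ᶜ → 0 < |f x| + |g x| := by
    intro x hx
    rcases (abs_nonneg (f x)).lt_or_eq with h | h
    · linarith [abs_nonneg (g x)]
    · rcases (abs_nonneg (g x)).lt_or_eq with h' | h'
      · linarith
      · exfalso
        apply hx
        exact ⟨by simpa [abs_eq_zero] using h.symm, by simpa [abs_eq_zero] using h'.symm⟩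
  have hdenom' : ∀ x : X, 0 < |f x| + |g x| := by
    intro x
    apply hdenom
    rw [hd]
    exact notMem_empty x
  set h : X → unitInterval := fun x =>
    ⟨|f x| / (|f x| + |g x|),
      ⟨div_nonneg (abs_nonneg _) (le_of_lt (hdenom' x)),
       (div_le_one (hdenom' x)).2 (by linarith [abs_nonneg (g x)])⟩⟩ with hh
  have hhcont : Continuous h := by
    apply Continuous.subtype_mk
    exact (f.continuous.abs).div ((f.continuous.abs).add (g.continuous.abs))
      (fun x => ne_of_gt (hdenom' x))
  set H := stoneCechExtend hhcont with hH
  have hHcont : Continuous H := continuous_stoneCechExtend hhcont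
  have hcl0 : closure (stoneCechUnit '' (f ⁻¹' {0})) ⊆ H ⁻¹' {⟨0, by norm_num, by norm_num⟩} := by
    apply closure_minimal ?_ (isClosed_singleton.preimage hHcont)
    rintro _ ⟨x, hx, rfl⟩
    simp only [mem_preimage, mem_singleton_iff, hH, unit_comp_extend hhcont x, hh]
    ext
    simp only [mem_preimage, mem_singleton_iff] at hx
    simp [hx]
  have hcl1 : closure (stoneCechUnit '' (g ⁻¹' {0})) ⊆ H ⁻¹' {⟨1, by norm_num, by norm_num⟩} := by
    apply closure_minimal ?_ (isClosed_singleton.preimage hHcont)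
    rintro _ ⟨x, hx, rfl⟩
    simp only [mem_preimage, mem_singleton_iff, hH, unit_comp_extend hhcont x, hh]
    ext
    simp only [mem_preimage, mem_singleton_iff] at hx
    have hfx : |f x| ≠ 0 := by
      intro h0
      apply (notMem_empty x)
      rw [← hd]
      exact ⟨by simpa [abs_eq_zero] using h0, hx⟩
    simp [hx, div_self hfx]
  rw [eq_empty_iff_forall_notMem]
  rintro p ⟨hp0, hp1⟩
  have h0 := hcl0 hp0
  have h1 := hcl1 hp1
  simp only [mem_preimage, mem_singleton_iff] at h0 h1
  rw [h0] at h1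
  replace h1 := congrArg Subtype.val h1
  norm_num at h1

end SC

def zSet (X : Type*) [TopologicalSpace X] (p : StoneCech X) : Set (Set X) :=
  {Z | IsZeroSet Z ∧ p ∈ closure (stoneCechUnit '' Z)}

section ZS

variable {X : Type*} [TopologicalSpace X] [T2Space X] [CompletelyRegularSpace X]

lemma zSet_inter {p : StoneCech X} {Z W : Set X} (hZ : Z ∈ zSet X p) (hW : W ∈ zSet X p) :
    Z ∩ W ∈ zSet X p := by
  refine ⟨hZ.1.inter hW.1, ?_⟩
  by_contra hp
  obtain ⟨k, hk0, hk1, _⟩ := exists_continuous_zero_one_of_isClosed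
    (isClosed_singleton (x := p)) (isClosed_closure (s := stoneCechUnit '' (Z ∩ W)))
    (disjoint_singleton_left.2 hp)
  set E : Set X := {x | k (stoneCechUnit x) ≤ 1/2} with hE
  have hEzero : IsZeroSet E := isZeroSet_le (k.continuous.comp continuous_stoneCechUnit) _
  have hdisj : (Z ∩ E) ∩ (W ∩ E) = ∅ := by
    rw [eq_empty_iff_forall_notMem]
    rintro x ⟨⟨hxZ, hxE⟩, hxW, -⟩
    have hcl : stoneCechUnit x ∈ closure (stoneCechUnit '' (Z ∩ W)) :=
      subset_closure ⟨x, ⟨hxZ, hxW⟩, rfl⟩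
    have := hk1 hcl
    simp only [Pi.one_apply] at this
    rw [hE] at hxE
    simp only [mem_setOf_eq, this] at hxE
    norm_num at hxE
  have hB1 := disjoint_closure_image_of_disjoint_zeroSets (hZ.1.inter hEzero)
    (hW.1.inter hEzero) hdisj
  have hOopen : IsOpen (k ⁻¹' (Iio (1/2))) := isOpen_Iio.preimage k.continuous
  have hpO : p ∈ k ⁻¹' (Iio (1/2)) := by
    simp only [mem_preimage, mem_Iio, hk0 (mem_singleton p)]
    norm_num
  have hsubZ : stoneCechUnit '' Z ∩ k ⁻¹' (Iio (1/2)) ⊆ stoneCechUnit '' (Z ∩ E) := by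
    rintro _ ⟨⟨x, hx, rfl⟩, hxk⟩
    refine ⟨x, ⟨hx, ?_⟩, rfl⟩
    show k (stoneCechUnit x) ≤ 1/2
    simp only [mem_preimage, mem_Iio] at hxk
    linarith
  have hsubW : stoneCechUnit '' W ∩ k ⁻¹' (Iio (1/2)) ⊆ stoneCechUnit '' (W ∩ E) := by
    rintro _ ⟨⟨x, hx, rfl⟩, hxk⟩
    refine ⟨x, ⟨hx, ?_⟩, rfl⟩
    show k (stoneCechUnit x) ≤ 1/2
    simp only [mem_preimage, mem_Iio] at hxk
    linarith
  have hpZ : p ∈ closure (stoneCechUnit '' (Z ∩ E)) :=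
    closure_mono hsubZ (mem_closure_inter_of_isOpen hZ.2 hOopen hpO)
  have hpW : p ∈ closure (stoneCechUnit '' (W ∩ E)) :=
    closure_mono hsubW (mem_closure_inter_of_isOpen hW.2 hOopen hpO)
  have : p ∈ (∅ : Set (StoneCech X)) := by rw [← hB1]; exact ⟨hpZ, hpW⟩
  exact this

lemma zSet_isZUltrafilter (p : StoneCech X) : IsZUltrafilter (zSet X p) := by
  have hzf : IsZFilter (zSet X p) := by
    refine ⟨⟨univ, isZeroSet_univ, ?_⟩, ?_, ?_, ?_⟩
    · rw [image_univ, denseRange_stoneCechUnit.closure_range]; trivial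
    · rintro Z ⟨hZ, hp⟩
      refine ⟨hZ, ?_⟩
      by_contra h
      rw [not_nonempty_iff_eq_empty] at h
      rw [h, image_empty, closure_empty] at hp
      exact hp
    · exact fun Z hZ W hW => zSet_inter hZ hW
    · rintro Z ⟨hZ, hp⟩ W hW hZW
      exact ⟨hW, closure_mono (image_mono hZW) hp⟩
  refine ⟨hzf, fun G hG hsub => ?_⟩
  apply subset_antisymm ?_ hsub
  intro W hWG
  refine ⟨(hG.2.1 W hWG).1, ?_⟩
  by_contra hp
  obtain ⟨k, hk0, hk1, _⟩ := exists_continuous_zero_one_of_isClosed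
    (isClosed_singleton (x := p)) (isClosed_closure (s := stoneCechUnit '' W))
    (disjoint_singleton_left.2 hp)
  set E : Set X := {x | k (stoneCechUnit x) ≤ 1/2} with hEdef
  have hE : E ∈ zSet X p := by
    refine ⟨isZeroSet_le (k.continuous.comp continuous_stoneCechUnit) _, ?_⟩
    have hpr : p ∈ closure (range (stoneCechUnit : X → StoneCech X)) := by
      rw [denseRange_stoneCechUnit.closure_range]; trivial
    have hOopen : IsOpen (k ⁻¹' (Iio (1/2))) := isOpen_Iio.preimage k.continuous
    have hpO : p ∈ k ⁻¹' (Iio (1/2)) := by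
      simp only [mem_preimage, mem_Iio, hk0 (mem_singleton p)]
      norm_num
    refine closure_mono ?_ (mem_closure_inter_of_isOpen hpr hOopen hpO)
    rintro _ ⟨⟨x, rfl⟩, hxk⟩
    refine ⟨x, ?_, rfl⟩
    show k (stoneCechUnit x) ≤ 1/2
    simp only [mem_preimage, mem_Iio] at hxk
    linarith
  have hEG : E ∈ G := hsub hE
  obtain ⟨x, hxE, hxW⟩ := (hG.2.1 _ (hG.2.2.1 _ hEG _ hWG)).2
  have hcl : stoneCechUnit x ∈ closure (stoneCechUnit '' W) := subset_closure ⟨x, hxW, rfl⟩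
  have h1 := hk1 hcl
  simp only [Pi.one_apply] at h1
  rw [hEdef] at hxE
  simp only [mem_setOf_eq, h1] at hxE
  norm_num at hxE

lemma mem_adh_zSet (p : StoneCech X) :
    p ∈ ⋂ Z ∈ zSet X p, closure (stoneCechUnit '' Z) :=
  mem_iInter₂.2 fun _ hZ => hZ.2

lemma eq_zSet_of_mem_adh {F : Set (Set X)} (hF : IsZUltrafilter F) {p : StoneCech X}
    (hp : p ∈ ⋂ Z ∈ F, closure (stoneCechUnit '' Z)) : F = zSet X p := by
  have hsub : F ⊆ zSet X p := fun Z hZ => ⟨(hF.1.2.1 Z hZ).1, (mem_iInter₂.1 hp) Z hZ⟩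
  exact (hF.2 _ (zSet_isZUltrafilter p).1 hsub).symm

lemma mem_of_unit_mem_closure {Z : Set X} (hZ : IsZeroSet Z) {x : X}
    (h : stoneCechUnit x ∈ closure (stoneCechUnit '' Z)) : x ∈ Z := by
  have hcl := isEmbedding_stoneCechUnit'.toIsInducing.closure_eq_preimage_closure_image Z
  have hx : x ∈ closure Z := by rw [hcl]; exact h
  rwa [hZ.isClosed.closure_eq] at hx

lemma sInter_eq_empty_of_not_mem_range {F : Set (Set X)} (hF : IsZUltrafilter F)
    {p : StoneCech X} (hp : p ∈ ⋂ Z ∈ F, closure (stoneCechUnit '' Z))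
    (hpr : p ∉ range (stoneCechUnit : X → StoneCech X)) : ⋂₀ F = ∅ := by
  rw [eq_empty_iff_forall_notMem]
  intro x hx
  apply hpr
  have hxadh : stoneCechUnit x ∈ ⋂ Z ∈ F, closure (stoneCechUnit '' Z) :=
    mem_iInter₂.2 fun Z hZ => subset_closure ⟨x, hx Z hZ, rfl⟩
  have := adh_subsingleton continuous_stoneCechUnit hF hp hxadh
  exact ⟨x, this.symm⟩

lemma not_mem_range_of_sInter_eq_empty {F : Set (Set X)} (hF : IsZUltrafilter F)
    {p : StoneCech X} (hp : p ∈ ⋂ Z ∈ F, closure (stoneCechUnit '' Z))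
    (hfree : ⋂₀ F = ∅) : p ∉ range (stoneCechUnit : X → StoneCech X) := by
  rintro ⟨x, rfl⟩
  have hx : x ∈ ⋂₀ F := by
    rw [mem_sInter]
    intro Z hZ
    exact mem_of_unit_mem_closure (hF.1.2.1 Z hZ).1 ((mem_iInter₂.1 hp) Z hZ)
  rw [hfree] at hx
  exact hx

end ZS

section Upsilon

variable {X : Type*} [TopologicalSpace X] [T2Space X] [CompletelyRegularSpace X]

lemma subtype_mem_closure {A S : Set X} (hS : S ⊆ A) {z : X} (hz : z ∈ A)
    (hzS : z ∈ closure S) : (⟨z, hz⟩ : ↥A) ∈ closure (Subtype.val ⁻¹' S) := by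
  rw [mem_closure_iff]
  intro t ht hzt
  obtain ⟨u, hu, rfl⟩ := isOpen_induced_iff.1 ht
  obtain ⟨w, hwu, hwS⟩ := mem_closure_iff.1 hzS u hu hzt
  exact ⟨⟨w, hS hwS⟩, hwu, hwS⟩

lemma closure_image_subset_upsilon_of_pseudocompact {P : Set X}
    (hP : IsPseudocompactSet P) : closure (stoneCechUnit '' P) ⊆ upsilonSet X := by
  intro p hp Zb hZb hpZ
  obtain ⟨G, rfl⟩ := hZb
  by_contra hne
  rw [not_nonempty_iff_eq_empty, eq_empty_iff_forall_notMem] at hne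
  have hGne : ∀ x : X, G (stoneCechUnit x) ≠ 0 := by
    intro x hx
    exact hne (stoneCechUnit x) ⟨by simpa using hx, ⟨x, rfl⟩⟩
  set g : C(↥P, ℝ) :=
    ⟨fun a => (|G (stoneCechUnit a.val)|)⁻¹, by
      apply Continuous.inv₀
      · exact (G.continuous.comp (continuous_stoneCechUnit.comp continuous_subtype_val)).abs
      · intro a
        simp only [abs_ne_zero]
        exact hGne a.val⟩ with hg
  obtain ⟨M, hM⟩ := hP g
  set c : ℝ := max M 0 + 1 with hc
  have hcpos : 0 < c := by positivity
  set O : Set (StoneCech X) := {q | |G q| < c⁻¹} with hO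
  have hOopen : IsOpen O := isOpen_Iio.preimage G.continuous.abs
  have hpO : p ∈ O := by
    have : G p = 0 := by simpa using hpZ
    simp only [hO, mem_setOf_eq, this, abs_zero]
    positivity
  obtain ⟨q, hqO, x, hxP, rfl⟩ := mem_closure_iff.1 hp O hOopen hpO
  have habs : 0 < |G (stoneCechUnit x)| := abs_pos.2 (hGne x)
  have hqO' : |G (stoneCechUnit x)| < c⁻¹ := hqO
  have hMg : (|G (stoneCechUnit x)|)⁻¹ ≤ M := by
    have := hM ⟨x, hxP⟩
    have hgx : g ⟨x, hxP⟩ = (|G (stoneCechUnit x)|)⁻¹ := rfl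
    rw [hgx] at this
    calc (|G (stoneCechUnit x)|)⁻¹ ≤ |(|G (stoneCechUnit x)|)⁻¹| := le_abs_self _
    _ ≤ M := this
  have hinv : |G (stoneCechUnit x)| * (|G (stoneCechUnit x)|)⁻¹ = 1 :=
    mul_inv_cancel₀ (ne_of_gt habs)
  have hMc : M < c := by
    rw [hc]
    have := le_max_left M (0:ℝ)
    linarith
  have h1 : c < (|G (stoneCechUnit x)|)⁻¹ := by
    rw [← inv_inv c]
    exact inv_strictAnti₀ (by positivity) hqO'
  linarith

lemma bounded_on_of_closure_subset_upsilon {T : Set X}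
    (hT : closure (stoneCechUnit '' T) ⊆ upsilonSet X) (f : C(X, ℝ)) :
    ∃ M : ℝ, ∀ x ∈ T, |f x| ≤ M := by
  by_contra hun
  push_neg at hun
  have hgmem : ∀ x : X, (1 + |f x|)⁻¹ ∈ unitInterval := by
    intro x
    constructor
    · positivity
    · have h1 : (1:ℝ) ≤ 1 + |f x| := by linarith [abs_nonneg (f x)]
      calc (1 + |f x|)⁻¹ ≤ 1⁻¹ := inv_anti₀ one_pos h1
      _ = 1 := inv_one
  set g : X → unitInterval := fun x => ⟨(1 + |f x|)⁻¹, hgmem x⟩ with hgdef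
  have hgc : Continuous g := by
    apply Continuous.subtype_mk
    apply Continuous.inv₀
    · exact continuous_const.add f.continuous.abs
    · intro x
      have : 0 < 1 + |f x| := by linarith [abs_nonneg (f x)]
      exact ne_of_gt this
  set G := stoneCechExtend hgc with hGdef
  have hGc : Continuous G := continuous_stoneCechExtend hgc
  set t : ℕ → Set (StoneCech X) :=
    fun n => closure (stoneCechUnit '' {x | x ∈ T ∧ (n : ℝ) < |f x|}) with ht
  have htne : (⋂ n, t n).Nonempty := by
    apply IsCompact.nonempty_iInter_of_directed_nonempty_isCompact_isClosed
    · intro n m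
      refine ⟨max n m, ?_, ?_⟩
      · apply closure_mono
        apply image_mono
        rintro x ⟨hxT, hx⟩
        refine ⟨hxT, lt_of_le_of_lt ?_ hx⟩
        exact_mod_cast Nat.cast_le.2 (le_max_left n m)
      · apply closure_mono
        apply image_mono
        rintro x ⟨hxT, hx⟩
        refine ⟨hxT, lt_of_le_of_lt ?_ hx⟩
        exact_mod_cast Nat.cast_le.2 (le_max_right n m)
    · intro n
      obtain ⟨x, hxT, hx⟩ := hun n
      have hne : ({x | x ∈ T ∧ (n : ℝ) < |f x|}).Nonempty := ⟨x, hxT, hx⟩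
      exact (hne.image _).closure
    · intro n
      exact isClosed_closure.isCompact
    · intro n
      exact isClosed_closure
  obtain ⟨p, hp⟩ := htne
  simp only [mem_iInter] at hp
  have hpT : p ∈ closure (stoneCechUnit '' T) := by
    refine closure_mono (image_mono ?_) (hp 0)
    exact fun x hx => hx.1
  have hGp0 : (G p : ℝ) = 0 := by
    have hle : ∀ n : ℕ, (G p : ℝ) ≤ (1 + (n:ℝ))⁻¹ := by
      intro n
      have hclosed : IsClosed {q : StoneCech X | (G q : ℝ) ≤ (1 + (n:ℝ))⁻¹} :=
        isClosed_Iic.preimage (continuous_subtype_val.comp hGc)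
      have hsub : stoneCechUnit '' {x | x ∈ T ∧ (n : ℝ) < |f x|} ⊆
          {q | (G q : ℝ) ≤ (1 + (n:ℝ))⁻¹} := by
        rintro _ ⟨x, ⟨hxT, hxn⟩, rfl⟩
        have : G (stoneCechUnit x) = g x := unit_comp_extend hgc x
        simp only [mem_setOf_eq, this, hgdef]
        apply inv_anti₀
        · positivity
        · linarith
      exact (closure_minimal hsub hclosed) (hp n)
    by_contra hne0
    have hpos : 0 < (G p : ℝ) := lt_of_le_of_ne (G p).2.1 (Ne.symm hne0)
    obtain ⟨n, hn⟩ := exists_nat_gt ((G p : ℝ))⁻¹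
    have h1 : (1 + (n:ℝ))⁻¹ < (G p : ℝ) := by
      rw [← inv_inv ((G p : ℝ))]
      apply inv_strictAnti₀
      · positivity
      · linarith
    linarith [hle n]
  have hzero : IsZeroSet ((fun q : StoneCech X => (G q : ℝ)) ⁻¹' {0}) :=
    ⟨⟨fun q => (G q : ℝ), continuous_subtype_val.comp hGc⟩, rfl⟩
  obtain ⟨q, hq0, x, rfl⟩ := hT hpT _ hzero (by simpa using hGp0)
  have : G (stoneCechUnit x) = g x := unit_comp_extend hgc x
  simp only [mem_preimage, mem_singleton_iff, this, hgdef] at hq0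
  have hpos : 0 < (1 + |f x|)⁻¹ := by
    have : 0 < 1 + |f x| := by linarith [abs_nonneg (f x)]
    positivity
  rw [hq0] at hpos
  exact lt_irrefl 0 hpos

end Upsilon

section Sigma

variable {X : Type*} [TopologicalSpace X] [T2Space X] [CompletelyRegularSpace X]

lemma isPseudocompactSet_closure_of_isOpen_of_bounded {C : Set X} (hC : IsOpen C)
    (hb : ∀ f : C(X, ℝ), ∃ M : ℝ, ∀ x ∈ closure C, |f x| ≤ M) :
    IsPseudocompactSet (closure C) := by
  intro h
  by_contra hun
  push_neg at hun
  have hWex : ∀ n : ℕ, ∃ O : Set X, IsOpen O ∧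
      Subtype.val ⁻¹' O = {s : ↥(closure C) | (n:ℝ) < |h s|} := by
    intro n
    have : IsOpen {s : ↥(closure C) | (n:ℝ) < |h s|} :=
      isOpen_lt continuous_const h.continuous.abs
    obtain ⟨O, hO, hOe⟩ := isOpen_induced_iff.1 this
    exact ⟨O, hO, hOe⟩
  choose O hOopen hOpre using hWex
  set V : ℕ → Set X := fun n => C ∩ O n with hV
  have hVopen : ∀ n, IsOpen (V n) := fun n => hC.inter (hOopen n)
  have hVsub : ∀ n, V n ⊆ C := fun _ => inter_subset_left
  have hVlt : ∀ n, ∀ x ∈ V n, ∀ hx : x ∈ closure C, (n:ℝ) < |h ⟨x, hx⟩| := by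
    intro n x hxV hx
    have hmem : (⟨x, hx⟩ : ↥(closure C)) ∈ Subtype.val ⁻¹' O n := hxV.2
    rw [hOpre n] at hmem
    exact hmem
  have hVne : ∀ n, (V n).Nonempty := by
    intro n
    obtain ⟨a, ha⟩ := hun n
    have haW : a ∈ Subtype.val ⁻¹' O n := by rw [hOpre n]; exact ha
    obtain ⟨w, hwO, hwC⟩ := mem_closure_iff.1 a.2 (O n) (hOopen n) haW
    exact ⟨w, hwC, hwO⟩
  choose y hy using hVne
  set Wt : ℕ → Set X := fun n => ⋃ m, V (n + m) with hWt
  have hWtsub : ∀ n, Wt n ⊆ closure C := by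
    intro n
    apply iUnion_subset
    intro m
    exact (hVsub _).trans subset_closure
  have hLF : LocallyFinite V := by
    intro z
    by_cases hz : z ∈ ⋂ n, closure (Wt n)
    · exfalso
      simp only [mem_iInter] at hz
      have hzC : z ∈ closure C := closure_minimal (hWtsub 0) isClosed_closure (hz 0)
      have hbound : ∀ n : ℕ, (n:ℝ) ≤ |h ⟨z, hzC⟩| := by
        intro n
        have hsub2 : Subtype.val ⁻¹' (Wt n) ⊆ {s : ↥(closure C) | (n:ℝ) ≤ |h s|} := by
          rintro s hs
          simp only [mem_preimage, hWt, mem_iUnion] at hs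
          obtain ⟨m, hm⟩ := hs
          have hlt := hVlt (n+m) s.val hm s.2
          have hcast : (n:ℝ) ≤ ((n+m : ℕ):ℝ) := by exact_mod_cast Nat.le_add_right n m
          have hs' : (⟨s.val, s.2⟩ : ↥(closure C)) = s := rfl
          rw [hs'] at hlt
          simp only [mem_setOf_eq]
          calc (n:ℝ) ≤ ((n+m : ℕ):ℝ) := hcast
          _ ≤ |h s| := le_of_lt hlt
        have hcl : (⟨z, hzC⟩ : ↥(closure C)) ∈ closure (Subtype.val ⁻¹' Wt n) :=
          subtype_mem_closure (hWtsub n) hzC (hz n)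
        have hclosed : IsClosed {s : ↥(closure C) | (n:ℝ) ≤ |h s|} :=
          isClosed_le continuous_const h.continuous.abs
        exact closure_minimal hsub2 hclosed hcl
      obtain ⟨n, hn⟩ := exists_nat_gt (|h ⟨z, hzC⟩|)
      linarith [hbound n]
    · simp only [mem_iInter] at hz
      push_neg at hz
      obtain ⟨n, hn⟩ := hz
      refine ⟨(closure (Wt n))ᶜ, (isClosed_closure.isOpen_compl).mem_nhds hn, ?_⟩
      apply Set.Finite.subset (Set.finite_Iio n)
      intro i hi
      obtain ⟨w, hwV, hwN⟩ := hi
      simp only [mem_Iio]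
      by_contra hge
      push_neg at hge
      apply hwN
      apply subset_closure
      rw [hWt]
      exact mem_iUnion.2 ⟨i - n, by rwa [Nat.add_sub_cancel' hge]⟩
  have hphi : ∀ n : ℕ, ∃ φ : X → ℝ, Continuous φ ∧ φ (y n) = 1 ∧
      (∀ x, x ∉ V n → φ x = 0) ∧ (∀ x, 0 ≤ φ x ∧ φ x ≤ 1) := by
    intro n
    obtain ⟨f, hf, hf0, hf1⟩ := CompletelyRegularSpace.completely_regular (y n) (V n)ᶜ
      (hVopen n).isClosed_compl (by simp [hy n])
    refine ⟨fun x => 1 - (f x : ℝ), by continuity, ?_, ?_, ?_⟩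
    · show (1:ℝ) - (f (y n) : ℝ) = 1
      rw [hf0]
      norm_num
    · intro x hx
      show (1:ℝ) - (f x : ℝ) = 0
      have : f x = 1 := hf1 hx
      rw [this]
      norm_num
    · intro x
      constructor
      · show (0:ℝ) ≤ 1 - (f x : ℝ)
        linarith [(f x).2.2]
      · show (1:ℝ) - (f x : ℝ) ≤ 1
        linarith [(f x).2.1]
  choose φ hφc hφ1 hφ0 hφ01 using hphi
  set g : X → ℝ := fun x => ∑ᶠ n : ℕ, (n : ℝ) * φ n x with hg
  have hsupp : ∀ n : ℕ, Function.support (fun x => (n:ℝ) * φ n x) ⊆ V n := by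
    intro n x hx
    by_contra hxV
    apply hx
    simp [hφ0 n x hxV]
  have hgc : Continuous g :=
    continuous_finsum (fun n => continuous_const.mul (hφc n)) (hLF.subset hsupp)
  obtain ⟨M, hM⟩ := hb ⟨g, hgc⟩
  obtain ⟨n, hn⟩ := exists_nat_gt M
  have hyn : y n ∈ closure C := subset_closure (hVsub n (hy n))
  have hgy : (n:ℝ) ≤ g (y n) := by
    have hfin : (Function.support (fun m : ℕ => (m:ℝ) * φ m (y n))).Finite := by
      apply Set.Finite.subset (hLF.point_finite (y n))
      intro m hm
      rw [Function.mem_support] at hm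
      simp only [mem_setOf_eq]
      by_contra hmV
      apply hm
      simp [hφ0 m (y n) hmV]
    have hle := single_le_finsum n hfin
      (fun m => mul_nonneg (Nat.cast_nonneg m) (hφ01 m (y n)).1)
    rwa [hφ1 n, mul_one] at hle
  have hMy := hM (y n) hyn
  have : g (y n) ≤ M := le_trans (le_abs_self _) hMy
  linarith

end Sigma

section CZ

variable {X : Type*} [TopologicalSpace X] [T2Space X] [CompletelyRegularSpace X]

lemma disjoint_clcompl_of_subset_cozero {Z C : Set X} (hZ : IsZeroSet Z)
    (hC : IsCozeroSet C) (hCpc : IsPseudocompactSet (closure C)) (hZC : Z ⊆ C) :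
    closure (stoneCechUnit '' Z) ∩ closure ((upsilonSet X)ᶜ) = ∅ := by
  have hd : Z ∩ Cᶜ = ∅ := by
    rw [eq_empty_iff_forall_notMem]
    rintro x ⟨hxZ, hxC⟩
    exact hxC (hZC hxZ)
  have hB1 := disjoint_closure_image_of_disjoint_zeroSets hZ hC hd
  set Om : Set (StoneCech X) := (closure (stoneCechUnit '' Cᶜ))ᶜ with hOm
  have hOopen : IsOpen Om := isClosed_closure.isOpen_compl
  have hZO : closure (stoneCechUnit '' Z) ⊆ Om := by
    intro q hq hq'
    have : q ∈ (∅ : Set (StoneCech X)) := by rw [← hB1]; exact ⟨hq, hq'⟩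
    exact this
  have hOsub : Om ⊆ closure (stoneCechUnit '' C) := by
    intro q hq
    rw [mem_closure_iff]
    intro N hN hqN
    have hqr : q ∈ closure (range (stoneCechUnit : X → StoneCech X)) := by
      rw [denseRange_stoneCechUnit.closure_range]; trivial
    obtain ⟨w, ⟨hwN, hwO⟩, x, rfl⟩ :=
      mem_closure_iff.1 hqr (N ∩ Om) (hN.inter hOopen) ⟨hqN, hq⟩
    by_cases hxC : x ∈ C
    · exact ⟨stoneCechUnit x, hwN, x, hxC, rfl⟩
    · exfalso
      have hmem : stoneCechUnit x ∈ stoneCechUnit '' Cᶜ := ⟨x, hxC, rfl⟩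
      exact hwO (subset_closure hmem)
  have hCup : closure (stoneCechUnit '' C) ⊆ upsilonSet X := by
    have h1 : closure (stoneCechUnit '' C) ⊆ closure (stoneCechUnit '' closure C) :=
      closure_mono (image_mono subset_closure)
    exact h1.trans (closure_image_subset_upsilon_of_pseudocompact hCpc)
  have hfin : closure ((upsilonSet X)ᶜ) ⊆ Omᶜ :=
    closure_minimal (compl_subset_compl.2 (hOsub.trans hCup)) hOopen.isClosed_compl
  rw [eq_empty_iff_forall_notMem]
  rintro q ⟨h1, h2⟩
  exact hfin h2 (hZO h1)

lemma exists_member_cozero_of_not_mem {p : StoneCech X}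
    (hp : p ∉ closure ((upsilonSet X)ᶜ)) {F : Set (Set X)} (hF : IsZUltrafilter F)
    (hadh : p ∈ ⋂ Z ∈ F, closure (stoneCechUnit '' Z)) :
    ∃ Z ∈ F, ∃ C : Set X, IsCozeroSet C ∧ IsPseudocompactSet (closure C) ∧ Z ⊆ C := by
  obtain ⟨k, hk0, hk1, _⟩ := exists_continuous_zero_one_of_isClosed
    (isClosed_singleton (x := p)) (isClosed_closure (s := (upsilonSet X)ᶜ))
    (disjoint_singleton_left.2 hp)
  have hkc : Continuous (fun x : X => k (stoneCechUnit x)) :=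
    k.continuous.comp continuous_stoneCechUnit
  set Z : Set X := {x | k (stoneCechUnit x) ≤ 1/4} with hZdef
  set C : Set X := {x | k (stoneCechUnit x) < 1/2} with hCdef
  have hZF : Z ∈ F := by
    apply hF.mem_of_forall_inter (isZeroSet_le hkc _)
    intro W hW
    have hpW : p ∈ closure (stoneCechUnit '' W) := mem_iInter₂.1 hadh W hW
    have hpO : p ∈ k ⁻¹' (Iio (1/4)) := by
      simp only [mem_preimage, mem_Iio, hk0 (mem_singleton p)]
      norm_num
    obtain ⟨q, hqO, x, hxW, rfl⟩ := mem_closure_iff.1 hpW (k ⁻¹' (Iio (1/4)))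
      (isOpen_Iio.preimage k.continuous) hpO
    refine ⟨x, hxW, ?_⟩
    show k (stoneCechUnit x) ≤ 1/4
    simp only [mem_preimage, mem_Iio] at hqO
    linarith
  have hCcoz : IsCozeroSet C := by
    show IsZeroSet Cᶜ
    have hcc : Cᶜ = {x | 1/2 ≤ k (stoneCechUnit x)} := by
      ext x
      simp [hCdef, not_lt]
    rw [hcc]
    exact isZeroSet_ge hkc _
  have hZC : Z ⊆ C := by
    intro x hx
    show k (stoneCechUnit x) < 1/2
    have : k (stoneCechUnit x) ≤ 1/4 := hx
    linarith
  have hCop : IsOpen C := isOpen_lt hkc continuous_const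
  have hclsub : closure (stoneCechUnit '' closure C) ⊆ upsilonSet X := by
    have h1 : stoneCechUnit '' closure C ⊆ closure (stoneCechUnit '' C) :=
      image_closure_subset_closure_image continuous_stoneCechUnit
    have h2 : closure (stoneCechUnit '' C) ⊆ {q | k q ≤ 1/2} := by
      have hcls : IsClosed {q : StoneCech X | k q ≤ 1/2} :=
        isClosed_le k.continuous continuous_const
      apply closure_minimal ?_ hcls
      rintro _ ⟨x, hx, rfl⟩
      show k (stoneCechUnit x) ≤ 1/2
      have hx' : k (stoneCechUnit x) < 1/2 := hx
      linarith
    have h3 : {q : StoneCech X | k q ≤ 1/2} ⊆ upsilonSet X := by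
      intro q hq
      by_contra hqu
      have h4 : k q = 1 := by simpa using hk1 (subset_closure hqu)
      simp only [mem_setOf_eq, h4] at hq
      norm_num at hq
    calc closure (stoneCechUnit '' closure C) ⊆ closure (closure (stoneCechUnit '' C)) :=
          closure_mono h1
    _ = closure (stoneCechUnit '' C) := closure_closure
    _ ⊆ upsilonSet X := h2.trans h3
  have hbd : ∀ f : C(X, ℝ), ∃ M : ℝ, ∀ x ∈ closure C, |f x| ≤ M :=
    fun f => bounded_on_of_closure_subset_upsilon hclsub f
  exact ⟨Z, hZF, C, hCcoz, isPseudocompactSet_closure_of_isOpen_of_bounded hCop hbd, hZC⟩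

end CZ
universe u

/-- Let `X` be a locally pseudocompact Tychonoff space. Then `ζX` is the unique (up to
equivalence of extensions) Tychonoff extension `Y` of `X` with compact remainder such that:
(1) a free z-ultrafilter in `X` is free in `Y` iff it has an element contained in a cozero-set
of `X` with pseudocompact closure; and (2) distinct z-ultrafilters in `X` have disjoint
adherences in `Y`. Formally: a Tychonoff extension `Y` of `X` (via the dense embedding `e`)
with compact remainder satisfies (1) and (2) iff it is equivalent to `ζX`, i.e. there is a
homeomorphism of `Y` onto `ζX` fixing `X` pointwise. -/
theorem zetaSet_unique_extension_zultrafilters (X : Type u) [TopologicalSpace X] [T2Space X]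
    [CompletelyRegularSpace X]
    (hlp : ∀ x : X, ∃ U : Set X, IsOpen U ∧ x ∈ U ∧ IsPseudocompactSet (closure U))
    (Y : Type u) [TopologicalSpace Y] [T2Space Y] [CompletelyRegularSpace Y]
    (e : X → Y) (he : IsEmbedding e) (hd : DenseRange e)
    (hrem : IsCompact (Set.range e)ᶜ) :
    ((∀ F : Set (Set X), IsZUltrafilter F → ⋂₀ F = ∅ →
        ((⋂ Z ∈ F, closure (e '' Z)) = ∅ ↔
          ∃ Z ∈ F, ∃ C : Set X, IsCozeroSet C ∧ IsPseudocompactSet (closure C) ∧ Z ⊆ C)) ∧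
      (∀ F G : Set (Set X), IsZUltrafilter F → IsZUltrafilter G → F ≠ G →
        (⋂ Z ∈ F, closure (e '' Z)) ∩ (⋂ Z ∈ G, closure (e '' Z)) = ∅)) ↔
    ∃ h : Y ≃ₜ zetaSet X, ∀ x : X, (h (e x) : StoneCech X) = stoneCechUnit x := by
  constructor
  · -- forward: conditions imply equivalence with ζX
    rintro ⟨h1, h2⟩
    set c : X → StoneCech Y := fun x => stoneCechUnit (e x) with hcdef
    have hc : Continuous c := continuous_stoneCechUnit.comp he.continuous
    set φ : StoneCech X → StoneCech Y := stoneCechExtend hc with hφdef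
    have hφc : Continuous φ := continuous_stoneCechExtend hc
    have hφu : ∀ x : X, φ (stoneCechUnit x) = c x := fun x =>
      congrFun (stoneCechExtend_extends hc) x
    have hceq : (fun x : X => φ (stoneCechUnit x)) = c := funext hφu
    have hf2 : ∀ (p : StoneCech X) (Z : Set X), p ∈ closure (stoneCechUnit '' Z) →
        φ p ∈ closure (c '' Z) := by
      intro p Z hp
      have h7 : φ p ∈ φ '' closure (stoneCechUnit '' Z) := ⟨p, hp, rfl⟩
      have h9 := image_closure_subset_closure_image hφc h7
      rwa [image_image, hceq] at h9
    have hf3 : ∀ (S : Set Y) (y : Y),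
        y ∈ closure S ↔ stoneCechUnit y ∈ closure (stoneCechUnit '' S) := by
      intro S y
      rw [(isEmbedding_stoneCechUnit' (X := Y)).toIsInducing.closure_eq_preimage_closure_image S]
      rfl
    have hf4 : ∀ Z : Set X, (stoneCechUnit : Y → StoneCech Y) '' (e '' Z) = c '' Z := by
      intro Z
      rw [image_image]
    have hpull : ∀ (F : Set (Set X)) (p : StoneCech X),
        p ∈ (⋂ Z ∈ F, closure (stoneCechUnit '' Z)) → ∀ y : Y,
        stoneCechUnit y = φ p → y ∈ ⋂ Z ∈ F, closure (e '' Z) := by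
      intro F p hp y hyφ
      rw [mem_iInter₂]
      intro Z hZ
      have h6 : φ p ∈ closure (c '' Z) := hf2 p Z (mem_iInter₂.1 hp Z hZ)
      rw [← hyφ, ← hf4 Z] at h6
      exact (hf3 (e '' Z) y).2 h6
    -- Main claim (I)
    have hIff : ∀ p : StoneCech X, p ∈ zetaSet X ↔ φ p ∈ range (stoneCechUnit : Y → StoneCech Y) := by
      intro p
      constructor
      · intro hpζ
        by_cases hpr : p ∈ range (stoneCechUnit : X → StoneCech X)
        · obtain ⟨x, rfl⟩ := hpr
          exact ⟨e x, (hφu x).symm⟩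
        · have hcl : p ∈ closure ((upsilonSet X)ᶜ) := by
            rcases hpζ with hr | hcl
            · exact absurd hr hpr
            · exact hcl
          have hF := zSet_isZUltrafilter p
          have hpadh := mem_adh_zSet p
          have hfree : ⋂₀ (zSet X p) = ∅ := sInter_eq_empty_of_not_mem_range hF hpadh hpr
          have hnoZC : ¬ ∃ Z ∈ zSet X p, ∃ C : Set X,
              IsCozeroSet C ∧ IsPseudocompactSet (closure C) ∧ Z ⊆ C := by
            rintro ⟨Z, hZ, C, hC, hCpc, hZC⟩
            have hdz := disjoint_clcompl_of_subset_cozero (hF.1.2.1 Z hZ).1 hC hCpc hZC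
            have hp1 : p ∈ closure (stoneCechUnit '' Z) := (mem_iInter₂.1 hpadh) Z hZ
            exact (eq_empty_iff_forall_notMem.1 hdz p) ⟨hp1, hcl⟩
          have hYne : (⋂ Z ∈ zSet X p, closure (e '' Z)) ≠ ∅ := by
            intro hempty
            exact hnoZC ((h1 (zSet X p) hF hfree).1 hempty)
          obtain ⟨y, hy⟩ := nonempty_iff_ne_empty.2 hYne
          have hvy : stoneCechUnit y ∈ ⋂ Z ∈ zSet X p, closure (c '' Z) := by
            rw [mem_iInter₂]
            intro Z hZ
            have h5 : y ∈ closure (e '' Z) := mem_iInter₂.1 hy Z hZ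
            have h6 := (hf3 (e '' Z) y).1 h5
            rwa [hf4 Z] at h6
          have hφp : φ p ∈ ⋂ Z ∈ zSet X p, closure (c '' Z) := by
            rw [mem_iInter₂]
            intro Z hZ
            exact hf2 p Z ((mem_iInter₂.1 hpadh) Z hZ)
          have heq := adh_subsingleton hc hF hφp hvy
          exact ⟨y, heq.symm⟩
      · rintro ⟨y, hyp⟩
        by_cases hpr : p ∈ range (stoneCechUnit : X → StoneCech X)
        · exact Or.inl hpr
        · right
          by_contra hcl
          have hF := zSet_isZUltrafilter p
          have hpadh := mem_adh_zSet p
          have hfree : ⋂₀ (zSet X p) = ∅ := sInter_eq_empty_of_not_mem_range hF hpadh hpr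
          have hZC := exists_member_cozero_of_not_mem hcl hF hpadh
          have hempty : (⋂ Z ∈ zSet X p, closure (e '' Z)) = ∅ :=
            (h1 (zSet X p) hF hfree).2 hZC
          have hy := hpull (zSet X p) p hpadh y hyp
          rw [hempty] at hy
          exact hy
    -- Main claim (II): injectivity on ζ
    have hinj : ∀ p ∈ zetaSet X, ∀ q ∈ zetaSet X, φ p = φ q → p = q := by
      intro p hp q hq hpq
      by_contra hne
      have hFG : zSet X p ≠ zSet X q := by
        intro heq
        exact hne (adh_subsingleton continuous_stoneCechUnit (zSet_isZUltrafilter p)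
          (mem_adh_zSet p) (heq ▸ mem_adh_zSet q))
      obtain ⟨y, hyp⟩ := (hIff p).1 hp
      have hyF : y ∈ ⋂ Z ∈ zSet X p, closure (e '' Z) :=
        hpull (zSet X p) p (mem_adh_zSet p) y hyp
      have hyG : y ∈ ⋂ Z ∈ zSet X q, closure (e '' Z) := by
        apply hpull (zSet X q) q (mem_adh_zSet q) y
        rw [hyp, hpq]
      have hdisj := h2 (zSet X p) (zSet X q) (zSet_isZUltrafilter p) (zSet_isZUltrafilter q) hFG
      exact (eq_empty_iff_forall_notMem.1 hdisj y) ⟨hyF, hyG⟩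
    -- Main claim (III): surjectivity
    have hsurj : ∀ y : Y, ∃ p ∈ zetaSet X, φ p = stoneCechUnit y := by
      intro y
      have hyc : stoneCechUnit y ∈ closure (range c) := by
        have hyr : y ∈ closure (range e) := hd y
        have := (hf3 (range e) y).1 hyr
        rwa [← image_univ, image_image, image_univ] at this
      have hranφ : IsClosed (range φ) := (isCompact_range hφc).isClosed
      have hcsub : range c ⊆ range φ := by
        rintro _ ⟨x, rfl⟩
        exact ⟨stoneCechUnit x, hφu x⟩
      have : stoneCechUnit y ∈ range φ :=
        closure_minimal hcsub hranφ hyc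
      obtain ⟨p, hp⟩ := this
      exact ⟨p, (hIff p).2 ⟨y, hp.symm⟩, hp⟩
    -- assemble the homeomorphism
    set φres : ↥(zetaSet X) → ↥(range (stoneCechUnit : Y → StoneCech Y)) :=
      fun w => ⟨φ w.val, (hIff w.val).1 w.2⟩ with hφres
    have hφresc : Continuous φres :=
      Continuous.subtype_mk (hφc.comp continuous_subtype_val) _
    have hφresbij : Function.Bijective φres := by
      constructor
      · rintro ⟨p, hp⟩ ⟨q, hq⟩ hpq
        apply Subtype.ext
        exact hinj p hp q hq (congrArg Subtype.val hpq)
      · rintro ⟨w, y, rfl⟩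
        obtain ⟨p, hpζ, hφp⟩ := hsurj y
        exact ⟨⟨p, hpζ⟩, Subtype.ext hφp⟩
    have hseteq : φ ⁻¹' (range (stoneCechUnit : Y → StoneCech Y)) = zetaSet X := by
      ext p
      exact (hIff p).symm
    have hφclosed : IsClosedMap φ := hφc.isClosedMap
    have hrest := hφclosed.restrictPreimage (range (stoneCechUnit : Y → StoneCech Y))
    have hφresclosed : IsClosedMap φres := by
      exact hrest.comp (Homeomorph.setCongr hseteq.symm).isClosedMap
    have hφresopen : IsOpenMap φres := by
      intro U hU
      have h2c : IsClosed (φres '' Uᶜ) := hφresclosed _ hU.isClosed_compl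
      rw [Set.image_compl_eq hφresbij] at h2c
      exact isClosed_compl_iff.1 h2c
    set E2 : ↥(zetaSet X) ≃ₜ ↥(range (stoneCechUnit : Y → StoneCech Y)) :=
      Equiv.toHomeomorphOfContinuousOpen (Equiv.ofBijective φres hφresbij) hφresc hφresopen
      with hE2
    set E1 : Y ≃ₜ ↥(range (stoneCechUnit : Y → StoneCech Y)) :=
      IsEmbedding.toHomeomorph (isEmbedding_stoneCechUnit' (X := Y)) with hE1
    refine ⟨E1.trans E2.symm, ?_⟩
    intro x
    have hxζ : stoneCechUnit x ∈ zetaSet X := Or.inl ⟨x, rfl⟩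
    have hE2x : E2 ⟨stoneCechUnit x, hxζ⟩ = E1 (e x) := by
      apply Subtype.ext
      show φ (stoneCechUnit x) = _
      rw [hφu x]
      rfl
    have : (E1.trans E2.symm) (e x) = ⟨stoneCechUnit x, hxζ⟩ := by
      show E2.symm (E1 (e x)) = _
      rw [← hE2x]
      exact E2.symm_apply_apply _
    rw [this]
  · -- backward: ζX satisfies the conditions
    rintro ⟨h, hh⟩
    have hζr : ∀ Z : Set X, stoneCechUnit '' Z ⊆ zetaSet X := by
      rintro Z _ ⟨x, -, rfl⟩
      exact Or.inl ⟨x, rfl⟩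
    have hmemcl : ∀ (Z : Set X) (w : ↥(zetaSet X)),
        w ∈ closure (Subtype.val ⁻¹' (stoneCechUnit '' Z)) ↔
        (w : StoneCech X) ∈ closure (stoneCechUnit '' Z) := by
      intro Z w
      constructor
      · intro hw
        exact (continuous_subtype_val.closure_preimage_subset _) hw
      · intro hw
        exact subtype_mem_closure (hζr Z) w.2 hw
    have himg : ∀ Z : Set X, (fun y => h y) '' (e '' Z) =
        Subtype.val ⁻¹' (stoneCechUnit '' Z) := by
      intro Z
      ext w
      constructor
      · rintro ⟨_, ⟨x, hxZ, rfl⟩, rfl⟩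
        exact ⟨x, hxZ, (hh x).symm⟩
      · rintro ⟨x, hxZ, hxw⟩
        refine ⟨e x, ⟨x, hxZ, rfl⟩, ?_⟩
        apply Subtype.ext
        rw [hh x, hxw]
    have hkey : ∀ (Z : Set X) (y : Y), y ∈ closure (e '' Z) ↔
        ((h y : ↥(zetaSet X)) : StoneCech X) ∈ closure (stoneCechUnit '' Z) := by
      intro Z y
      rw [← hmemcl Z (h y), ← himg Z]
      constructor
      · intro hy
        rw [← Homeomorph.image_closure]
        exact ⟨y, hy, rfl⟩
      · intro hy
        rw [← Homeomorph.image_closure] at hy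
        obtain ⟨y', hy', hyy⟩ := hy
        have heq : y' = y := h.injective hyy
        rwa [heq] at hy'
    constructor
    · intro F hF hfree
      obtain ⟨p, hp⟩ := adh_nonempty (c := (stoneCechUnit : X → StoneCech X)) hF
      have hsing := adh_subsingleton continuous_stoneCechUnit hF
      have hpr : p ∉ range (stoneCechUnit : X → StoneCech X) :=
        not_mem_range_of_sInter_eq_empty hF hp hfree
      constructor
      · intro hempty
        have hpz : p ∉ closure ((upsilonSet X)ᶜ) := by
          intro hpz
          have hpζ : p ∈ zetaSet X := Or.inr hpz
          have hmem : h.symm ⟨p, hpζ⟩ ∈ ⋂ Z ∈ F, closure (e '' Z) := by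
            rw [mem_iInter₂]
            intro Z hZ
            rw [hkey Z (h.symm ⟨p, hpζ⟩), Homeomorph.apply_symm_apply]
            exact mem_iInter₂.1 hp Z hZ
          rw [hempty] at hmem
          exact hmem
        exact exists_member_cozero_of_not_mem hpz hF hp
      · rintro ⟨Z, hZF, C, hCcoz, hCpc, hZC⟩
        have hdisj := disjoint_clcompl_of_subset_cozero (hF.1.2.1 Z hZF).1 hCcoz hCpc hZC
        rw [eq_empty_iff_forall_notMem]
        intro y hy
        have hq : ((h y : ↥(zetaSet X)) : StoneCech X) ∈ ⋂ Z' ∈ F, closure (stoneCechUnit '' Z') := by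
          rw [mem_iInter₂]
          intro Z' hZ'
          exact (hkey Z' y).1 (mem_iInter₂.1 hy Z' hZ')
        have hqp : ((h y : ↥(zetaSet X)) : StoneCech X) = p := hsing hq hp
        have hpζ : p ∈ zetaSet X := hqp ▸ (h y : ↥(zetaSet X)).2
        rcases hpζ with hr | hcl
        · exact hpr hr
        · have hp1 : p ∈ closure (stoneCechUnit '' Z) := mem_iInter₂.1 hp Z hZF
          exact (eq_empty_iff_forall_notMem.1 hdisj p) ⟨hp1, hcl⟩
    · intro F G hF hG hne
      obtain ⟨Z₀, hZ₀, W₀, hW₀, hdzw⟩ := hF.exists_disjoint hG hne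
      have hB1 := disjoint_closure_image_of_disjoint_zeroSets (hF.1.2.1 _ hZ₀).1
        (hG.1.2.1 _ hW₀).1 hdzw
      rw [eq_empty_iff_forall_notMem]
      rintro y ⟨hyF, hyG⟩
      have hq1 := (hkey Z₀ y).1 (mem_iInter₂.1 hyF Z₀ hZ₀)
      have hq2 := (hkey W₀ y).1 (mem_iInter₂.1 hyG W₀ hW₀)
      exact (eq_empty_iff_forall_notMem.1 hB1 _) ⟨hq1, hq2⟩
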